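/- The set of minimizers of the unconstrained stochastic optimization problem min Φ(x,z) coincides with the solution set of the constrained problem {(x,z) : g(z) = 0 and f(x,z) = 0}, where g(z) = E_T[½‖T^⊤A^⊤z‖²] and f(x,z) = E_S[½‖S^⊤(Ax−(b−z))‖²] and Φ = g + f, for any choice of the distributions of S and T. -/

import Mathlib

open Matrix MeasureTheory

/-- The set of minimizers of `Φ = g + f` coincides with the solution set of the
constrained problem `g(z) = 0 ∧ f(x,z) = 0`, for any distributions of `S` and `T`. -/
theorem minimizers_eq_constrained {m n ℓ s : ℕ} (A : Matrix (Fin m) (Fin n) ℝ)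
    (b : Fin m → ℝ)
    {Ω₁ Ω₂ : Type*} [MeasurableSpace Ω₁] [MeasurableSpace Ω₂]
    (μ : Measure Ω₁) [IsProbabilityMeasure μ]
    (ν : Measure Ω₂) [IsProbabilityMeasure ν]
    (T : Ω₁ → Matrix (Fin n) (Fin s) ℝ) (S : Ω₂ → Matrix (Fin m) (Fin ℓ) ℝ)
    (g : (Fin m → ℝ) → ℝ) (f : (Fin n → ℝ) → (Fin m → ℝ) → ℝ)
    (hg : g = fun z => ∫ ω, (1 : ℝ)/2 *
      ((T ω)ᵀ.mulVec (Aᵀ.mulVec z) ⬝ᵥ (T ω)ᵀ.mulVec (Aᵀ.mulVec z)) ∂μ)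
    (hf : f = fun x z => ∫ ω, (1 : ℝ)/2 *
      ((S ω)ᵀ.mulVec (A.mulVec x - (b - z)) ⬝ᵥ (S ω)ᵀ.mulVec (A.mulVec x - (b - z))) ∂ν)
    (hgint : ∀ z, Integrable (fun ω => (1 : ℝ)/2 *
      ((T ω)ᵀ.mulVec (Aᵀ.mulVec z) ⬝ᵥ (T ω)ᵀ.mulVec (Aᵀ.mulVec z))) μ)
    (hfint : ∀ x z, Integrable (fun ω => (1 : ℝ)/2 *
      ((S ω)ᵀ.mulVec (A.mulVec x - (b - z)) ⬝ᵥ (S ω)ᵀ.mulVec (A.mulVec x - (b - z)))) ν)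
    (Φ : (Fin n → ℝ) → (Fin m → ℝ) → ℝ) (hΦ : Φ = fun x z => g z + f x z) :
    {p : (Fin n → ℝ) × (Fin m → ℝ) | ∀ q : (Fin n → ℝ) × (Fin m → ℝ), Φ p.1 p.2 ≤ Φ q.1 q.2}
      = {p : (Fin n → ℝ) × (Fin m → ℝ) | g p.2 = 0 ∧ f p.1 p.2 = 0} := by
  have dotnn : ∀ (k : ℕ) (v : Fin k → ℝ), 0 ≤ v ⬝ᵥ v := fun k v =>
    Finset.sum_nonneg fun i _ => mul_self_nonneg _
  have hg0 : ∀ z, 0 ≤ g z := by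
    intro z; rw [hg]
    exact integral_nonneg fun ω => mul_nonneg (by norm_num) (dotnn _ _)
  have hf0 : ∀ x z, 0 ≤ f x z := by
    intro x z; rw [hf]
    exact integral_nonneg fun ω => mul_nonneg (by norm_num) (dotnn _ _)
  -- zero value lemmas
  have gzero : ∀ z, Aᵀ.mulVec z = 0 → g z = 0 := by
    intro z hz; rw [hg]; simp [hz]
  have fzero : ∀ x z, A.mulVec x = b - z → f x z = 0 := by
    intro x z hx; rw [hf]; simp [hx]
  -- construct a global zero of Φ via orthogonal projection
  obtain ⟨x₀, z₀, hz₀, hx₀⟩ : ∃ x₀ z₀, Aᵀ.mulVec z₀ = 0 ∧ A.mulVec x₀ = b - z₀ := by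
    let V : Submodule ℝ (EuclideanSpace ℝ (Fin m)) :=
      LinearMap.range ((WithLp.linearEquiv 2 ℝ (Fin m → ℝ)).symm.toLinearMap ∘ₗ Matrix.mulVecLin A)
    let b' : EuclideanSpace ℝ (Fin m) := WithLp.toLp 2 b
    let p : EuclideanSpace ℝ (Fin m) := (V.orthogonalProjectionOnto b' : EuclideanSpace ℝ (Fin m))
    obtain ⟨x₀, hx⟩ : ∃ x₀, WithLp.toLp 2 (A.mulVec x₀) = p := (V.orthogonalProjectionOnto b').2
    let z₀ : EuclideanSpace ℝ (Fin m) := b' - p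
    refine ⟨x₀, z₀.ofLp, ?_, ?_⟩
    · have hmem : z₀ ∈ Vᗮ := V.sub_starProjection_mem_orthogonal b'
      funext i
      let u : EuclideanSpace ℝ (Fin m) := WithLp.toLp 2 (A.mulVec (Pi.single i 1))
      have hAe : u ∈ V := ⟨Pi.single i 1, rfl⟩
      have hinner : inner ℝ u z₀ = (0 : ℝ) :=
        (Submodule.mem_orthogonal V _).1 hmem _ hAe
      have hsum : ∑ j, A j i * z₀ j = 0 := by
        rw [PiLp.inner_apply] at hinner
        simpa [u, Matrix.mulVec_single, mul_comm] using hinner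
      simpa [Matrix.mulVec, dotProduct, Matrix.transpose_apply] using hsum
    · funext i
      have : (A.mulVec x₀) i = p i := congrFun (congrArg WithLp.ofLp hx) i
      show (A.mulVec x₀) i = b i - (b i - p i)
      rw [this]
      ring
  have hΦ0 : Φ x₀ z₀ = 0 := by
    rw [hΦ]; simp [gzero z₀ hz₀, fzero x₀ z₀ hx₀]
  ext ⟨x, z⟩
  simp only [Set.mem_setOf_eq]
  constructor
  · intro h
    have h1 : Φ x z ≤ 0 := hΦ0 ▸ h (x₀, z₀)
    have h2 : 0 ≤ Φ x z := by rw [hΦ]; exact add_nonneg (hg0 z) (hf0 x z)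
    have hsum : g z + f x z = 0 := by
      have : Φ x z = 0 := le_antisymm h1 h2
      rwa [hΦ] at this
    constructor
    · linarith [hf0 x z, hg0 z]
    · linarith [hf0 x z, hg0 z]
  · rintro ⟨h1, h2⟩ q
    rw [hΦ]
    simp only [h1, h2, add_zero]
    exact add_nonneg (hg0 q.2) (hf0 q.1 q.2)
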